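/- Let K(z,w) = (ν/π) Σ_{γ∈Γ} χ(γ) e^{−(ν/2)|γ|² + ν(z γ̄ − w̄ γ + z w̄)} with χ a unimodular pseudo-character. Then K satisfies the Γ-bi-invariance K(z+γ, w+γ') = χ(γ) e^{(ν/2)|γ|² + ν z γ̄} K(z,w) conj(χ(γ')) e^{(ν/2)|γ'|² + ν w̄ γ'} for all z, w ∈ C and γ, γ' ∈ Γ. -/

import Mathlib

/-- The lattice point `m ω₁ + n ω₂` of the lattice `Γ = ℤω₁ + ℤω₂`. -/
noncomputable def latPt (ω₁ ω₂ : ℂ) (p : ℤ × ℤ) : ℂ := (p.1 : ℂ) * ω₁ + (p.2 : ℂ) * ω₂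

/-- The `(Γ,χ)`-automorphic reproducing kernel function
`K(z,w) = (ν/π) Σ_{γ∈Γ} χ(γ) e^{−(ν/2)|γ|² + ν(z γ̄ − w̄ γ + z w̄)}`. -/
noncomputable def autoKer (ν : ℝ) (ω₁ ω₂ : ℂ) (χ : ℂ → ℂ) (z w : ℂ) : ℂ :=
  ((ν / Real.pi : ℝ) : ℂ) *
    ∑' γ : ℤ × ℤ,
      χ (latPt ω₁ ω₂ γ) *
        Complex.exp (-(ν : ℂ) / 2 * (‖latPt ω₁ ω₂ γ‖ : ℂ) ^ 2 +
          (ν : ℂ) * (z * starRingEnd ℂ (latPt ω₁ ω₂ γ) - starRingEnd ℂ w * latPt ω₁ ω₂ γ +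
            z * starRingEnd ℂ w))

lemma latPt_add' (ω₁ ω₂ : ℂ) (x y : ℤ × ℤ) :
    latPt ω₁ ω₂ (x + y) = latPt ω₁ ω₂ x + latPt ω₁ ω₂ y := by
  simp [latPt, Prod.fst_add, Prod.snd_add]; ring

lemma latPt_neg' (ω₁ ω₂ : ℂ) (x : ℤ × ℤ) : latPt ω₁ ω₂ (-x) = -latPt ω₁ ω₂ x := by
  simp [latPt]; ring

lemma latPt_zero' (ω₁ ω₂ : ℂ) : latPt ω₁ ω₂ 0 = 0 := by simp [latPt]

lemma habs' (x : ℂ) : ((‖x‖ : ℝ) : ℂ) ^ 2 = x * starRingEnd ℂ x := by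
  rw [← Complex.ofReal_pow, Complex.sq_norm, Complex.mul_conj]

lemma keylem' (c d : ℂ) (S L e1 g : ℂ) (h : S + L = e1 + g) :
    c * d * Complex.exp S * Complex.exp L = d * Complex.exp e1 * (c * Complex.exp g) := by
  rw [mul_assoc, ← Complex.exp_add, h, Complex.exp_add]; ring

theorem autoKer_bi_invariance (ν : ℝ) (hν : 0 < ν) (ω₁ ω₂ : ℂ)
    (hrank : (ω₁ * starRingEnd ℂ ω₂).im ≠ 0) (χ : ℂ → ℂ)
    (hχuni : ∀ p : ℤ × ℤ, ‖χ (latPt ω₁ ω₂ p)‖ = 1)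
    (hχpseudo : ∀ p q : ℤ × ℤ,
      χ (latPt ω₁ ω₂ p + latPt ω₁ ω₂ q) =
        χ (latPt ω₁ ω₂ p) * χ (latPt ω₁ ω₂ q) *
          Complex.exp (((ν : ℂ) / 2) *
            (latPt ω₁ ω₂ p * starRingEnd ℂ (latPt ω₁ ω₂ q) -
              starRingEnd ℂ (latPt ω₁ ω₂ p) * latPt ω₁ ω₂ q)))
    (hsum : ∀ z w : ℂ, Summable fun γ : ℤ × ℤ =>
      χ (latPt ω₁ ω₂ γ) *
        Complex.exp (-(ν : ℂ) / 2 * (‖latPt ω₁ ω₂ γ‖ : ℂ) ^ 2 +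
          (ν : ℂ) * (z * starRingEnd ℂ (latPt ω₁ ω₂ γ) - starRingEnd ℂ w * latPt ω₁ ω₂ γ +
            z * starRingEnd ℂ w))) :
    ∀ (z w : ℂ) (p q : ℤ × ℤ),
      autoKer ν ω₁ ω₂ χ (z + latPt ω₁ ω₂ p) (w + latPt ω₁ ω₂ q) =
        χ (latPt ω₁ ω₂ p) *
          Complex.exp ((ν : ℂ) / 2 * (‖latPt ω₁ ω₂ p‖ : ℂ) ^ 2 +
            (ν : ℂ) * z * starRingEnd ℂ (latPt ω₁ ω₂ p)) *
          autoKer ν ω₁ ω₂ χ z w *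
          starRingEnd ℂ (χ (latPt ω₁ ω₂ q)) *
          Complex.exp ((ν : ℂ) / 2 * (‖latPt ω₁ ω₂ q‖ : ℂ) ^ 2 +
            (ν : ℂ) * starRingEnd ℂ w * latPt ω₁ ω₂ q) := by
  have hχ0 : χ 0 = 1 := by
    have hne : χ 0 ≠ 0 := by
      have := hχuni 0
      rw [latPt_zero'] at this
      intro h0; rw [h0] at this; simp at this
    have h := hχpseudo 0 0
    rw [latPt_zero'] at h
    simp only [add_zero, map_zero, mul_zero, zero_mul, sub_zero, Complex.exp_zero, mul_one] at h
    exact (mul_left_cancel₀ hne (by rw [mul_one, ← h])).symm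
  have hχneg : ∀ γ : ℤ × ℤ, χ (latPt ω₁ ω₂ (-γ)) = starRingEnd ℂ (χ (latPt ω₁ ω₂ γ)) := by
    intro γ
    have hne : χ (latPt ω₁ ω₂ γ) ≠ 0 := by
      intro h0; have := hχuni γ; rw [h0] at this; simp at this
    have h := hχpseudo γ (-γ)
    rw [latPt_neg'] at h
    simp only [add_neg_cancel, hχ0] at h
    rw [show ((ν:ℂ)/2) * (latPt ω₁ ω₂ γ * starRingEnd ℂ (-latPt ω₁ ω₂ γ) -
        starRingEnd ℂ (latPt ω₁ ω₂ γ) * -latPt ω₁ ω₂ γ) = 0 by rw [map_neg]; ring,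
      Complex.exp_zero, mul_one] at h
    have h2 : χ (latPt ω₁ ω₂ γ) * χ (-latPt ω₁ ω₂ γ) = 1 := h.symm
    have hconj : χ (latPt ω₁ ω₂ γ) * starRingEnd ℂ (χ (latPt ω₁ ω₂ γ)) = 1 := by
      rw [Complex.mul_conj, ← Complex.sq_norm, hχuni γ]; norm_num
    rw [latPt_neg']
    exact (mul_left_cancel₀ hne (hconj.trans h2.symm)).symm
  -- Step A: translation in the first variable, termwise via reindexing γ ↦ γ + p
  have hz : ∀ (z w : ℂ) (p : ℤ × ℤ),
      autoKer ν ω₁ ω₂ χ (z + latPt ω₁ ω₂ p) w =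
        χ (latPt ω₁ ω₂ p) *
          Complex.exp ((ν : ℂ) / 2 * (‖latPt ω₁ ω₂ p‖ : ℂ) ^ 2 +
            (ν : ℂ) * z * starRingEnd ℂ (latPt ω₁ ω₂ p)) *
          autoKer ν ω₁ ω₂ χ z w := by
    intro z w p
    unfold autoKer
    rw [← (Equiv.addRight p).tsum_eq (fun γ : ℤ × ℤ =>
      χ (latPt ω₁ ω₂ γ) *
        Complex.exp (-(ν : ℂ) / 2 * (‖latPt ω₁ ω₂ γ‖ : ℂ) ^ 2 +
          (ν : ℂ) * ((z + latPt ω₁ ω₂ p) * starRingEnd ℂ (latPt ω₁ ω₂ γ) -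
            starRingEnd ℂ w * latPt ω₁ ω₂ γ + (z + latPt ω₁ ω₂ p) * starRingEnd ℂ w)))]
    have hterm : ∀ δ : ℤ × ℤ,
        χ (latPt ω₁ ω₂ ((Equiv.addRight p) δ)) *
          Complex.exp (-(ν : ℂ) / 2 * (‖latPt ω₁ ω₂ ((Equiv.addRight p) δ)‖ : ℂ) ^ 2 +
            (ν : ℂ) * ((z + latPt ω₁ ω₂ p) * starRingEnd ℂ (latPt ω₁ ω₂ ((Equiv.addRight p) δ)) -
              starRingEnd ℂ w * latPt ω₁ ω₂ ((Equiv.addRight p) δ) +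
              (z + latPt ω₁ ω₂ p) * starRingEnd ℂ w)) =
        (χ (latPt ω₁ ω₂ p) *
          Complex.exp ((ν : ℂ) / 2 * (‖latPt ω₁ ω₂ p‖ : ℂ) ^ 2 +
            (ν : ℂ) * z * starRingEnd ℂ (latPt ω₁ ω₂ p))) *
        (χ (latPt ω₁ ω₂ δ) *
          Complex.exp (-(ν : ℂ) / 2 * (‖latPt ω₁ ω₂ δ‖ : ℂ) ^ 2 +
            (ν : ℂ) * (z * starRingEnd ℂ (latPt ω₁ ω₂ δ) - starRingEnd ℂ w * latPt ω₁ ω₂ δ +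
              z * starRingEnd ℂ w))) := by
      intro δ
      simp only [Equiv.coe_addRight, latPt_add']
      rw [hχpseudo δ p]
      simp only [habs', map_add]
      exact keylem' _ _ _ _ _ _ (by ring)
    rw [tsum_congr hterm, tsum_mul_left]
    ring
  -- Step B: Hermitian symmetry K(z,w) = conj K(w,z)
  have hsymm : ∀ z w : ℂ,
      autoKer ν ω₁ ω₂ χ z w = starRingEnd ℂ (autoKer ν ω₁ ω₂ χ w z) := by
    intro z w
    unfold autoKer
    rw [map_mul, Complex.conj_ofReal]
    congr 1
    conv_rhs => rw [starRingEnd_apply, tsum_star]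
    rw [← (Equiv.neg (ℤ × ℤ)).tsum_eq]
    refine tsum_congr fun γ => ?_
    have hχneg' : χ (-latPt ω₁ ω₂ γ) = starRingEnd ℂ (χ (latPt ω₁ ω₂ γ)) := by
      rw [← latPt_neg']; exact hχneg γ
    simp only [Equiv.neg_apply, ← starRingEnd_apply, map_mul, latPt_neg', hχneg',
      Complex.conj_conj, ← Complex.exp_conj, map_add, map_sub, map_neg, map_div₀,
      map_pow, map_ofNat, Complex.conj_ofReal, norm_neg]
    congr 1
    congr 1
    ring
  intro z w p q
  rw [hsymm (z + latPt ω₁ ω₂ p) (w + latPt ω₁ ω₂ q), hz w (z + latPt ω₁ ω₂ p) q,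
    map_mul, map_mul, ← hsymm (z + latPt ω₁ ω₂ p) w, hz z w p, ← Complex.exp_conj]
  simp only [map_add, map_mul, map_div₀, map_pow, map_ofNat, Complex.conj_ofReal,
    Complex.conj_conj]
  ring
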